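/- arXiv:1404.1668 — 2 statements merged into one kernel-verified Lean document; each statement's English description precedes it below -/
import Mathlib

section
/- Let V : [0,∞) → ℝ≥0 be continuously differentiable, and let Ξ ⊆ [0,∞) be a measurable set. Suppose ω₁, ω₂ > 0 and for almost every t: V'(t) ≤ −ω₁ V(t) if t ∉ Ξ, and V'(t) ≤ ω₂ V(t) if t ∈ Ξ. Then for all t ≥ 0, V(t) ≤ exp(−ω₁ t + (ω₁+ω₂)·|Ξ ∩ [0,t]|) · V(0), where |·| denotes Lebesgue measure. -/
open MeasureTheory

/-- Integral form of Gronwall's inequality with nonnegative kernel. -/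
lemma gronwall_aux (u k : ℝ → ℝ) (hu : Continuous u) (hu_nn : ∀ s, 0 ≤ u s)
    (hk : ∀ a b : ℝ, IntervalIntegrable k volume a b) (hk0 : ∀ s, 0 ≤ k s)
    (T : ℝ) (hT : 0 ≤ T)
    (h : ∀ t ∈ Set.Icc (0:ℝ) T, u t ≤ u 0 + ∫ s in (0:ℝ)..t, k s * u s) :
    u T ≤ u 0 * Real.exp (∫ s in (0:ℝ)..T, k s) := by
  set K : ℝ → ℝ := fun t => ∫ s in (0:ℝ)..t, k s with hKdef
  have hku : ∀ a b : ℝ, IntervalIntegrable (fun s => k s * u s) volume a b :=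
    fun a b => (hk a b).mul_continuousOn hu.continuousOn
  set A : ℝ → ℝ := fun t => u 0 + ∫ s in (0:ℝ)..t, k s * u s with hAdef
  have hKc : Continuous K := intervalIntegral.continuous_primitive hk 0
  have hAc : Continuous A :=
    continuous_const.add (intervalIntegral.continuous_primitive hku 0)
  have hKsub : ∀ a b : ℝ, K b - K a = ∫ s in a..b, k s := by
    intro a b
    exact intervalIntegral.integral_interval_sub_left (hk 0 b) (hk 0 a)
  have hAsub : ∀ a b : ℝ, A b - A a = ∫ s in a..b, k s * u s := by
    intro a b
    simp only [hAdef, add_sub_add_left_eq_sub]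
    exact intervalIntegral.integral_interval_sub_left (hku 0 b) (hku 0 a)
  have hKmono : ∀ a b : ℝ, a ≤ b → K a ≤ K b := by
    intro a b hab
    have h1 : 0 ≤ ∫ s in a..b, k s :=
      intervalIntegral.integral_nonneg hab (fun s _ => hk0 s)
    have := hKsub a b; linarith
  have hAmono : ∀ a b : ℝ, a ≤ b → A a ≤ A b := by
    intro a b hab
    have h1 : 0 ≤ ∫ s in a..b, k s * u s :=
      intervalIntegral.integral_nonneg hab (fun s _ => mul_nonneg (hk0 s) (hu_nn s))
    have := hAsub a b; linarith
  have hA0 : A 0 = u 0 := by simp [hAdef]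
  have hK0 : K 0 = 0 := by simp [hKdef]
  -- Main claim: for every ε > 0, A t ≤ (u 0 + ε) * exp ((1+ε) * K t) on [0,T].
  have main : ∀ ε > (0:ℝ), ∀ t ∈ Set.Icc (0:ℝ) T,
      A t ≤ (u 0 + ε) * Real.exp ((1 + ε) * K t) := by
    intro ε hε
    set B : ℝ → ℝ := fun t => (u 0 + ε) * Real.exp ((1 + ε) * K t) with hBdef
    have hBc : Continuous B :=
      continuous_const.mul ((continuous_const.mul hKc).rexp)
    have hBpos : ∀ t, 0 < B t :=
      fun t => mul_pos (by linarith [hu_nn 0]) (Real.exp_pos _)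
    by_contra hcon
    push_neg at hcon
    obtain ⟨t₀, ht₀, hBt₀⟩ := hcon
    set S : Set ℝ := {t | t ∈ Set.Icc (0:ℝ) T ∧ B t < A t} with hSdef
    have hSne : S.Nonempty := ⟨t₀, ht₀, hBt₀⟩
    have hSbdd : BddBelow S := ⟨0, fun x hx => hx.1.1⟩
    set c : ℝ := sInf S with hcdef
    have hcIcc : c ∈ Set.Icc (0:ℝ) T := by
      have h1 : c ∈ closure S := csInf_mem_closure hSne hSbdd
      have h2 : closure S ⊆ Set.Icc 0 T := by
        apply closure_minimal _ isClosed_Icc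
        exact fun x hx => hx.1
      exact h2 h1
    have hclb : ∀ x ∈ S, c ≤ x := fun x hx => csInf_le hSbdd hx
    -- c itself is not in S
    have hcS : A c ≤ B c := by
      by_contra hcS
      push_neg at hcS
      -- then c ∈ S; c > 0 since A 0 ≤ B 0
      have hc0 : 0 < c := by
        rcases lt_or_eq_of_le hcIcc.1 with h' | h'
        · exact h'
        · exfalso
          rw [← h'] at hcS
          rw [hA0] at hcS
          have : B 0 = u 0 + ε := by simp [hBdef, hK0]
          linarith [hcS, this.ge]
      -- by continuity, A > B on a left neighborhood of c, contradicting inf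
      have hopen : IsOpen {t | B t < A t} := isOpen_lt hBc hAc
      obtain ⟨η, hη, hball⟩ := Metric.isOpen_iff.mp hopen c hcS
      set x : ℝ := c - min η c / 2 with hxdef
      have hmin : 0 < min η c := lt_min hη hc0
      have hx1 : x < c := by simp only [hxdef]; linarith
      have hx0 : 0 ≤ x := by
        have : min η c ≤ c := min_le_right _ _
        simp only [hxdef]; linarith
      have hxball : x ∈ Metric.ball c η := by
        simp only [Metric.mem_ball, hxdef, Real.dist_eq]
        have : min η c ≤ η := min_le_left _ _
        rw [abs_of_nonpos (by linarith)]
        linarith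
      have hxS : x ∈ S := ⟨⟨hx0, le_trans hx1.le hcIcc.2⟩, hball hxball⟩
      exact absurd (hclb x hxS) (not_le.mpr hx1)
    -- pick a point of S close to c in the K-metric
    set ε' : ℝ := min (1/2) (ε / (1 + ε)) with hε'def
    have hε'pos : 0 < ε' := lt_min (by norm_num) (div_pos hε (by linarith))
    obtain ⟨η, hη, hKcont⟩ := Metric.continuousAt_iff.mp (hKc.continuousAt (x := c)) ε' hε'pos
    obtain ⟨x, hxS, hxlt⟩ := exists_lt_of_csInf_lt hSne (by linarith : sInf S < c + η)
    have hcx : c ≤ x := hclb x hxS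
    have hΔKlt : K x - K c < ε' := by
      have : dist x c < η := by
        rw [Real.dist_eq, abs_of_nonneg (by linarith)]
        rw [hcdef] at hxlt; linarith
      have := hKcont this
      rw [Real.dist_eq] at this
      exact lt_of_le_of_lt (le_abs_self _) this
    set Δ : ℝ := K x - K c with hΔdef
    have hΔ0 : 0 ≤ Δ := by have := hKmono c x hcx; simp only [hΔdef]; linarith
    have hΔhalf : Δ ≤ 1/2 := le_trans hΔKlt.le (min_le_left _ _)
    have hΔε : (1 + ε) * Δ ≤ ε := by
      have h1 : Δ ≤ ε / (1 + ε) := le_trans hΔKlt.le (min_le_right _ _)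
      have h2 : (0:ℝ) < 1 + ε := by linarith
      calc (1 + ε) * Δ ≤ (1 + ε) * (ε / (1 + ε)) := by
            exact mul_le_mul_of_nonneg_left h1 h2.le
        _ = ε := by field_simp
    -- A x - A c ≤ Δ * A x
    have hstep : A x - A c ≤ Δ * A x := by
      rw [hAsub c x]
      have hmono : ∫ s in c..x, k s * u s ≤ ∫ s in c..x, k s * A x := by
        apply intervalIntegral.integral_mono_on hcx (hku c x) ((hk c x).mul_const _)
        intro r hr
        have hr1 : r ∈ Set.Icc (0:ℝ) T :=
          ⟨le_trans hcIcc.1 hr.1, le_trans hr.2 (hxS.1.2)⟩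
        have h1 : u r ≤ A r := h r hr1
        have h2 : A r ≤ A x := hAmono r x hr.2
        exact mul_le_mul_of_nonneg_left (le_trans h1 h2) (hk0 r)
      have heq : ∫ s in c..x, k s * A x = Δ * A x := by
        rw [intervalIntegral.integral_mul_const, hΔdef, hKsub c x]
      linarith [hmono, heq.le]
    have hBx : B x = B c * Real.exp ((1 + ε) * Δ) := by
      simp only [hBdef, hΔdef]
      rw [mul_assoc, ← Real.exp_add]
      ring_nf
    have hAxBx : B x < A x := hxS.2
    have hAx0 : 0 ≤ A x := le_trans (hu_nn 0) (by rw [← hA0]; exact hAmono 0 x (le_trans hcIcc.1 hcx))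
    -- derive contradiction
    have hexp : 1 + (1 + ε) * Δ ≤ Real.exp ((1 + ε) * Δ) := by
      have := Real.add_one_le_exp ((1 + ε) * Δ); linarith
    have hBcpos := hBpos c
    have h3 : B c * (1 + (1 + ε) * Δ) ≤ B c * Real.exp ((1 + ε) * Δ) :=
      mul_le_mul_of_nonneg_left hexp hBcpos.le
    have h2 : B c * Real.exp ((1 + ε) * Δ) < A x := by rw [← hBx]; exact hAxBx
    have h6 := mul_lt_mul_of_pos_right (lt_of_le_of_lt h3 h2)
      (show (0:ℝ) < 1 - Δ by linarith)
    have h7 : A x * (1 - Δ) ≤ B c := by nlinarith [hstep, hcS]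
    have h9 : 0 ≤ B c * (ε * Δ - (1 + ε) * Δ * Δ) := by
      have h8 : (1 + ε) * Δ * Δ ≤ ε * Δ := mul_le_mul_of_nonneg_right hΔε hΔ0
      exact mul_nonneg hBcpos.le (by linarith)
    nlinarith [h6, h7, h9]
  -- take the limit ε → 0⁺
  have hfinal : ∀ ε > (0:ℝ), u T ≤ (u 0 + ε) * Real.exp ((1 + ε) * K T) := by
    intro ε hε
    exact le_trans (h T ⟨hT, le_rfl⟩) (main ε hε T ⟨hT, le_rfl⟩)
  have htend : Filter.Tendsto (fun ε : ℝ => (u 0 + ε) * Real.exp ((1 + ε) * K T))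
      (nhdsWithin 0 (Set.Ioi 0)) (nhds (u 0 * Real.exp (K T))) := by
    have hc : Continuous (fun ε : ℝ => (u 0 + ε) * Real.exp ((1 + ε) * K T)) :=
      (continuous_const.add continuous_id).mul
        (((continuous_const.add continuous_id).mul continuous_const).rexp)
    have h0 := (hc.tendsto 0).mono_left (nhdsWithin_le_nhds (s := Set.Ioi (0:ℝ)))
    simpa using h0
  exact ge_of_tendsto htend
    (Filter.eventually_of_mem self_mem_nhdsWithin (fun ε hε => hfinal ε hε))

theorem stmt2 (V : ℝ → ℝ) (hV1 : ContDiff ℝ 1 V) (hVnn : ∀ t, 0 ≤ V t)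
    (Ξ : Set ℝ) (hΞ : MeasurableSet Ξ)
    (ω₁ ω₂ : ℝ) (hω₁ : 0 < ω₁) (hω₂ : 0 < ω₂)
    (hae : ∀ᵐ t ∂volume, 0 ≤ t →
      ((t ∉ Ξ → deriv V t ≤ -ω₁ * V t) ∧ (t ∈ Ξ → deriv V t ≤ ω₂ * V t))) :
    ∀ t : ℝ, 0 ≤ t →
      V t ≤ Real.exp (-ω₁ * t + (ω₁ + ω₂) * (volume (Ξ ∩ Set.Icc 0 t)).toReal) * V 0 := by
  intro t ht
  set u : ℝ → ℝ := fun s => V s * Real.exp (ω₁ * s) with hu_def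
  set k : ℝ → ℝ := fun s => Set.indicator Ξ (fun _ => ω₁ + ω₂) s with hk_def
  have hVd : Differentiable ℝ V := hV1.differentiable one_ne_zero
  have hVc' : Continuous (deriv V) := hV1.continuous_deriv le_rfl
  have hexpc : Continuous (fun s : ℝ => Real.exp (ω₁ * s)) :=
    (continuous_const.mul continuous_id).rexp
  have huc : Continuous u := hVd.continuous.mul hexpc
  have hu_nn : ∀ s, 0 ≤ u s := fun s => mul_nonneg (hVnn s) (Real.exp_pos _).le
  have hk0 : ∀ s, 0 ≤ k s := fun s =>
    Set.indicator_nonneg (fun _ _ => by linarith) s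
  have hk_int : ∀ a b : ℝ, IntervalIntegrable k volume a b := by
    intro a b
    rw [intervalIntegrable_iff]
    exact (integrableOn_const measure_Ioc_lt_top.ne).indicator hΞ
  -- derivative of u
  set u' : ℝ → ℝ := fun s => deriv V s * Real.exp (ω₁ * s) + V s * (Real.exp (ω₁ * s) * ω₁)
    with hu'_def
  have hu' : ∀ s, HasDerivAt u (u' s) s := by
    intro s
    have h1 : HasDerivAt (fun x : ℝ => ω₁ * x) ω₁ s := by
      simpa using (hasDerivAt_id s).const_mul ω₁
    have h2 : HasDerivAt (fun x : ℝ => Real.exp (ω₁ * x)) (Real.exp (ω₁ * s) * ω₁) s := h1.exp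
    exact ((hVd s).hasDerivAt).mul h2
  have hu'c : Continuous u' :=
    (hVc'.mul hexpc).add (hVd.continuous.mul (hexpc.mul continuous_const))
  -- integral inequality
  have hineq : ∀ t' ∈ Set.Icc (0:ℝ) t, u t' ≤ u 0 + ∫ s in (0:ℝ)..t', k s * u s := by
    intro t' ht'
    have hftc : ∫ s in (0:ℝ)..t', u' s = u t' - u 0 :=
      intervalIntegral.integral_eq_sub_of_hasDerivAt (fun s _ => hu' s)
        (hu'c.intervalIntegrable 0 t')
    have hku_int : IntervalIntegrable (fun s => k s * u s) volume 0 t' :=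
      (hk_int 0 t').mul_continuousOn huc.continuousOn
    have hmono : ∫ s in (0:ℝ)..t', u' s ≤ ∫ s in (0:ℝ)..t', k s * u s := by
      apply intervalIntegral.integral_mono_ae_restrict ht'.1
        (hu'c.intervalIntegrable 0 t') hku_int
      have h1 : ∀ᵐ s ∂(volume.restrict (Set.Icc (0:ℝ) t')), 0 ≤ s →
          ((s ∉ Ξ → deriv V s ≤ -ω₁ * V s) ∧ (s ∈ Ξ → deriv V s ≤ ω₂ * V s)) :=
        ae_restrict_of_ae hae
      have h2 : ∀ᵐ s ∂(volume.restrict (Set.Icc (0:ℝ) t')), s ∈ Set.Icc (0:ℝ) t' :=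
        ae_restrict_mem measurableSet_Icc
      filter_upwards [h1, h2] with s hs hsmem
      obtain ⟨hs1, hs2⟩ := hs hsmem.1
      have hepos : 0 < Real.exp (ω₁ * s) := Real.exp_pos _
      by_cases hsΞ : s ∈ Ξ
      · have hkval : k s = ω₁ + ω₂ := Set.indicator_of_mem hsΞ _
        have := hs2 hsΞ
        simp only [hu'_def, hu_def, hkval]
        nlinarith
      · have hkval : k s = 0 := Set.indicator_of_notMem hsΞ _
        have := hs1 hsΞ
        simp only [hu'_def, hu_def, hkval]
        nlinarith
    linarith [hftc, hmono]
  have hgron := gronwall_aux u k huc hu_nn hk_int hk0 t ht hineq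
  -- compute the integral of k
  have hvol : volume (Ξ ∩ Set.Icc 0 t) = volume (Ξ ∩ Set.Ioc 0 t) := by
    apply le_antisymm
    · calc volume (Ξ ∩ Set.Icc 0 t) ≤ volume ((Ξ ∩ Set.Ioc 0 t) ∪ {0}) := by
            apply measure_mono
            rintro x ⟨hx1, hx2, hx3⟩
            rcases eq_or_lt_of_le hx2 with h' | h'
            · exact Or.inr (by simp [← h'])
            · exact Or.inl ⟨hx1, h', hx3⟩
        _ ≤ volume (Ξ ∩ Set.Ioc 0 t) + volume ({0} : Set ℝ) := measure_union_le _ _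
        _ = volume (Ξ ∩ Set.Ioc 0 t) := by simp
    · exact measure_mono (Set.inter_subset_inter_right _ Set.Ioc_subset_Icc_self)
  have hKval : ∫ s in (0:ℝ)..t, k s
      = (ω₁ + ω₂) * (volume (Ξ ∩ Set.Icc 0 t)).toReal := by
    rw [intervalIntegral.integral_of_le ht]
    have : ∫ s in Set.Ioc (0:ℝ) t, k s =
        ((volume.restrict (Set.Ioc (0:ℝ) t)) Ξ).toReal • (ω₁ + ω₂) :=
      integral_indicator_const (ω₁ + ω₂) hΞ
    rw [this, Measure.restrict_apply hΞ, smul_eq_mul, ← hvol, mul_comm]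
  have hu0 : u 0 = V 0 := by simp [hu_def]
  rw [hKval, hu0] at hgron
  -- final algebra
  have hepos : (0:ℝ) < Real.exp (ω₁ * t) := Real.exp_pos _
  rw [← mul_le_mul_iff_left₀ hepos]
  calc V t * Real.exp (ω₁ * t) = u t := rfl
    _ ≤ V 0 * Real.exp ((ω₁ + ω₂) * (volume (Ξ ∩ Set.Icc 0 t)).toReal) := hgron
    _ = Real.exp (-ω₁ * t + (ω₁ + ω₂) * (volume (Ξ ∩ Set.Icc 0 t)).toReal) * V 0
        * Real.exp (ω₁ * t) := by
      have hkey : Real.exp (-ω₁ * t + (ω₁ + ω₂) * (volume (Ξ ∩ Set.Icc 0 t)).toReal)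
          * Real.exp (ω₁ * t)
          = Real.exp ((ω₁ + ω₂) * (volume (Ξ ∩ Set.Icc 0 t)).toReal) := by
        rw [← Real.exp_add]; congr 1; ring
      rw [← hkey]; ring
end

section
/- Under the event-triggering rule that guarantees ‖e(t)‖ ≤ σ‖x(t)‖ is maintained between samples, with error dynamics satisfying ‖e(t)‖ ≤ (1/2)(e^{2L(t−t_k)} − 1)‖x(t_k)‖ and e(t_k) = 0, the inter-sample time satisfies t_{k+1} − t_k ≥ (1/(2L))·ln((3σ+1)/(σ+1)) > 0 for every k. Formally: if t_{k+1} is the infimum of times t > t_k at which ‖e(t)‖ > σ‖x(t)‖, then t_{k+1} − t_k ≥ ε with ε = (1/(2L))ln((3σ+1)/(σ+1)). -/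
theorem stmt8 {n : ℕ} (tk L σ : ℝ) (hL : 0 < L) (hσ : 0 < σ)
    (x e : ℝ → EuclideanSpace ℝ (Fin n))
    (he0 : e tk = 0)
    (hbnd : ∀ t, tk ≤ t → ‖e t‖ ≤ (1/2) * (Real.exp (2 * L * (t - tk)) - 1) * ‖x tk‖)
    (htri : ∀ t, tk ≤ t → ‖x tk‖ ≤ ‖e t‖ + ‖x t‖)
    (S : Set ℝ) (hS : S = {t : ℝ | tk < t ∧ σ * ‖x t‖ < ‖e t‖})
    (hne : S.Nonempty) :
    (1 / (2 * L)) * Real.log ((3 * σ + 1) / (σ + 1)) ≤ sInf S - tk := by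
  have key : ∀ t ∈ S, tk + (1 / (2 * L)) * Real.log ((3 * σ + 1) / (σ + 1)) ≤ t := by
    intro t ht
    rw [hS] at ht
    obtain ⟨hlt, htrig⟩ := ht
    have hle : tk ≤ t := le_of_lt hlt
    have h1 := hbnd t hle
    have h2 := htri t hle
    have hxt : (0:ℝ) ≤ ‖x t‖ := norm_nonneg _
    have het : (0:ℝ) ≤ ‖e t‖ := norm_nonneg _
    have hx0 : 0 < ‖x tk‖ := by
      rcases lt_or_eq_of_le (norm_nonneg (x tk)) with h | h
      · exact h
      · exfalso
        have : ‖e t‖ ≤ 0 := by rw [← h] at h1; linarith [h1]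
        nlinarith
    set E := Real.exp (2 * L * (t - tk)) with hE
    have hEgt : (3 * σ + 1) / (σ + 1) < E := by
      have h3 : σ * ‖x tk‖ < (σ + 1) * ‖e t‖ := by nlinarith
      have h4 : 2 * σ * ‖x tk‖ < (σ + 1) * (E - 1) * ‖x tk‖ := by nlinarith
      have h5 : 2 * σ < (σ + 1) * (E - 1) := by
        nlinarith
      rw [div_lt_iff₀ (by linarith)]
      nlinarith
    have hpos : (0:ℝ) < (3 * σ + 1) / (σ + 1) := by positivity
    have hlog : Real.log ((3 * σ + 1) / (σ + 1)) ≤ 2 * L * (t - tk) := by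
      calc Real.log ((3 * σ + 1) / (σ + 1)) ≤ Real.log E :=
            Real.log_le_log (by positivity) (le_of_lt hEgt)
        _ = 2 * L * (t - tk) := Real.log_exp _
    have h2L : (0:ℝ) < 2 * L := by linarith
    have : (1 / (2 * L)) * Real.log ((3 * σ + 1) / (σ + 1)) ≤ t - tk := by
      rw [one_div_mul_eq_div, div_le_iff₀ h2L]
      nlinarith
    linarith
  have := le_csInf hne key
  linarith
end
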